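/- (Discrete energy conservation.) Let τ > 0, h_x > 0, h_y > 0, let m, N ≥ 1, let L be a real m×m matrix and D = Lᵀ L (acting on ℂ^m through the entrywise embedding ℝ ↪ ℂ). Suppose U⁰, U¹, …, U^N ∈ ℂ^m satisfy, for every 1 ≤ n ≤ N−1 and every component 1 ≤ j ≤ m, the three-level scheme i (U^{n+1}_j − U^{n−1}_j)/(2τ) − (D((U^{n+1} + U^{n−1})/2))_j + |U^n_j|² (U^{n+1}_j + U^{n−1}_j)/2 = 0. Define, for 0 ≤ n ≤ N−1, E^n = (1/2) h_x h_y (‖L U^{n+1}‖² + ‖L U^n‖²) − (1/2) h_x h_y ∑_{j=1}^m |U^n_j|² |U^{n+1}_j|², where ‖x‖² = ∑_j |x_j|². Then E^n = E^0 for all 0 ≤ n ≤ N−1. -/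

import Mathlib

open Matrix

/-- Discrete energy conservation for the linearized three-level scheme
`i δ_t U^n − D U^{n̄} + |U^n|² U^{n̄} = 0` with `D = Lᵀ L`:
the discrete energy
`E^n = (h_x h_y/2)(‖L U^{n+1}‖² + ‖L U^n‖²) − (h_x h_y/2) ∑_j |U^n_j|²|U^{n+1}_j|²`
satisfies `E^n = E^0` for all `0 ≤ n ≤ N−1`. -/
theorem discrete_energy_conservation
    (τ hx hy : ℝ) (hτ : 0 < τ) (hhx : 0 < hx) (hhy : 0 < hy)
    (m N : ℕ) (hm : 1 ≤ m) (hN : 1 ≤ N)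
    (L : Matrix (Fin m) (Fin m) ℝ)
    (U : ℕ → Fin m → ℂ)
    (hscheme : ∀ n : ℕ, 1 ≤ n → n ≤ N - 1 → ∀ j : Fin m,
      Complex.I * (U (n + 1) j - U (n - 1) j) / (2 * (τ : ℂ)) -
        ((Lᵀ * L).map (Complex.ofReal) *ᵥ fun i => (U (n + 1) i + U (n - 1) i) / 2) j +
        (‖U n j‖ : ℂ) ^ 2 * (U (n + 1) j + U (n - 1) j) / 2 = 0)
    (E : ℕ → ℝ)
    (hE : ∀ n : ℕ, E n =
      1 / 2 * (hx * hy) *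
          ((∑ j, ‖(L.map (Complex.ofReal) *ᵥ U (n + 1)) j‖ ^ 2) +
            ∑ j, ‖(L.map (Complex.ofReal) *ᵥ U n) j‖ ^ 2) -
        1 / 2 * (hx * hy) * ∑ j, ‖U n j‖ ^ 2 * ‖U (n + 1) j‖ ^ 2) :
    ∀ n : ℕ, n ≤ N - 1 → E n = E 0 := by
  have hns : ∀ z : ℂ, ‖z‖ ^ 2 = Complex.normSq z := by
    intro z; rw [Complex.sq_norm]
  -- pointwise real-part identity
  have hpt : ∀ x y : ℂ, (((x + y) / 2) * (starRingEnd ℂ) (x - y)).re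
      = (‖x‖ ^ 2 - ‖y‖ ^ 2) / 2 := by
    intro x y
    rw [hns, hns]
    simp [Complex.div_re, Complex.mul_re, Complex.normSq_apply, Complex.add_re, Complex.sub_re,
      Complex.add_im, Complex.sub_im, Complex.conj_re, Complex.conj_im]
    ring
  have h0 : ∀ z : ℂ, (Complex.I * z / (2 * (τ : ℂ)) * (starRingEnd ℂ) z).re = 0 := by
    intro z
    have e1 : Complex.I * z / (2 * (τ : ℂ)) * (starRingEnd ℂ) z
        = Complex.I * ((Complex.normSq z : ℝ) : ℂ) / (2 * (τ : ℂ)) := by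
      rw [← Complex.mul_conj]
      ring
    have hτ' : (2 * (τ : ℂ)) ≠ 0 := by
      simp [Complex.ofReal_ne_zero, ne_of_gt hτ]
    have e2 : Complex.I * ((Complex.normSq z : ℝ) : ℂ) / (2 * (τ : ℂ))
        = ((Complex.normSq z / (2 * τ) : ℝ) : ℂ) * Complex.I := by
      push_cast
      field_simp
    rw [e1, e2, Complex.re_ofReal_mul]
    simp
  -- matrix expansion
  have expand : ∀ v w : Fin m → ℂ,
      ∑ j, (((Lᵀ * L).map Complex.ofReal) *ᵥ v) j * (starRingEnd ℂ) (w j)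
      = ∑ l, ((L.map Complex.ofReal) *ᵥ v) l *
          (starRingEnd ℂ) (((L.map Complex.ofReal) *ᵥ w) l) := by
    intro v w
    have hmap : (Lᵀ * L).map Complex.ofReal
        = (L.map Complex.ofReal)ᵀ * (L.map Complex.ofReal) := by
      ext i j
      simp [Matrix.mul_apply, Matrix.map_apply]
    rw [hmap]
    simp only [← Matrix.mulVec_mulVec]
    simp only [Matrix.mulVec, dotProduct, Matrix.transpose_apply, Matrix.map_apply,
      map_sum, _root_.map_mul, Complex.conj_ofReal, Finset.sum_mul, Finset.mul_sum]
    rw [Finset.sum_comm]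
    apply Finset.sum_congr rfl
    intro l _
    apply Finset.sum_congr rfl
    intro j _
    apply Finset.sum_congr rfl
    intro x _
    ring
  -- key energy identity
  have key : ∀ n : ℕ, 1 ≤ n → n ≤ N - 1 →
      (∑ j, ‖(L.map (Complex.ofReal) *ᵥ U (n + 1)) j‖ ^ 2)
        - (∑ j, ‖(L.map (Complex.ofReal) *ᵥ U (n - 1)) j‖ ^ 2)
      = ∑ j, ‖U n j‖ ^ 2 * (‖U (n + 1) j‖ ^ 2 - ‖U (n - 1) j‖ ^ 2) := by
    intro n h1 h2
    set a : Fin m → ℂ := U (n + 1) with ha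
    set b : Fin m → ℂ := U (n - 1) with hb
    have hD : ∀ j, (((Lᵀ * L).map Complex.ofReal) *ᵥ fun i => (a i + b i) / 2) j
        = Complex.I * (a j - b j) / (2 * (τ : ℂ)) + (‖U n j‖ : ℂ) ^ 2 * (a j + b j) / 2 := by
      intro j
      have h := hscheme n h1 h2 j
      rw [← ha, ← hb] at h
      linear_combination -h
    -- linearity of mulVec
    have hAV : ∀ l, ((L.map Complex.ofReal) *ᵥ fun i => (a i + b i) / 2) l
        = (((L.map Complex.ofReal) *ᵥ a) l + ((L.map Complex.ofReal) *ᵥ b) l) / 2 := by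
      intro l
      simp only [Matrix.mulVec, dotProduct]
      rw [← Finset.sum_add_distrib, Finset.sum_div]
      exact Finset.sum_congr rfl fun i _ => by ring
    have hAW : ∀ l, ((L.map Complex.ofReal) *ᵥ fun i => a i - b i) l
        = ((L.map Complex.ofReal) *ᵥ a) l - ((L.map Complex.ofReal) *ᵥ b) l := by
      intro l
      simp only [Matrix.mulVec, dotProduct]
      rw [← Finset.sum_sub_distrib]
      exact Finset.sum_congr rfl fun i _ => by ring
    -- compute real part of T two ways
    have hT := expand (fun i => (a i + b i) / 2) (fun j => a j - b j)
    have hre1 : (∑ j, (((Lᵀ * L).map Complex.ofReal) *ᵥ fun i => (a i + b i) / 2) j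
        * (starRingEnd ℂ) (a j - b j)).re
        = ((∑ j, ‖((L.map Complex.ofReal) *ᵥ a) j‖ ^ 2)
            - ∑ j, ‖((L.map Complex.ofReal) *ᵥ b) j‖ ^ 2) / 2 := by
      rw [hT]
      rw [Complex.re_sum]
      rw [← Finset.sum_sub_distrib, Finset.sum_div]
      apply Finset.sum_congr rfl
      intro l _
      rw [hAW l, hAV l]
      exact hpt _ _
    have hre2 : (∑ j, (((Lᵀ * L).map Complex.ofReal) *ᵥ fun i => (a i + b i) / 2) j
        * (starRingEnd ℂ) (a j - b j)).re
        = (∑ j, ‖U n j‖ ^ 2 * (‖a j‖ ^ 2 - ‖b j‖ ^ 2)) / 2 := by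
      rw [Complex.re_sum, Finset.sum_div]
      apply Finset.sum_congr rfl
      intro j _
      rw [hD j]
      rw [add_mul, Complex.add_re, h0 (a j - b j)]
      have : (‖U n j‖ : ℂ) ^ 2 * (a j + b j) / 2 * (starRingEnd ℂ) (a j - b j)
          = ((‖U n j‖ ^ 2 : ℝ) : ℂ) * (((a j + b j) / 2) * (starRingEnd ℂ) (a j - b j)) := by
        push_cast
        ring
      rw [this, Complex.re_ofReal_mul, hpt (a j) (b j)]
      ring
    have := hre1.symm.trans hre2
    rw [ha, hb] at this ⊢
    linarith
  -- one-step conservation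
  have step : ∀ n : ℕ, 1 ≤ n → n ≤ N - 1 → E n = E (n - 1) := by
    intro n h1 h2
    have hn1 : n - 1 + 1 = n := Nat.succ_pred_eq_of_pos h1
    have k := key n h1 h2
    have hsplit : ∑ j, ‖U n j‖ ^ 2 * (‖U (n + 1) j‖ ^ 2 - ‖U (n - 1) j‖ ^ 2)
        = (∑ j, ‖U n j‖ ^ 2 * ‖U (n + 1) j‖ ^ 2)
          - ∑ j, ‖U (n - 1) j‖ ^ 2 * ‖U n j‖ ^ 2 := by
      rw [← Finset.sum_sub_distrib]
      exact Finset.sum_congr rfl fun j _ => by ring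
    rw [hsplit] at k
    rw [hE n, hE (n - 1), hn1]
    linear_combination (1 / 2 * (hx * hy)) * k
  intro n hn
  induction n with
  | zero => rfl
  | succ k ih =>
    rw [step (k + 1) (by omega) hn, Nat.add_sub_cancel]
    exact ih (by omega)
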